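/- arXiv:2510.16613 — 3 statements merged into one kernel-verified Lean document; each statement's English description precedes it below -/
import Mathlib

section
/- Chaplygin comparison for the phase curves: let 0 < K₋ ≤ K(θ) ≤ K₊ and let p̄(q) solve dp̄/dq = (-q+1-e₀)/(K(θ(q))·p̄) in the region p̄ < 0, q decreasing, with initial point (q*, p*), p* < 0. Then for q ≤ q* in this region, the solution satisfies p̄₊(q) ≤ p̄(q) ≤ p̄₋(q), where p̄± are the solutions of the same equation with K replaced by the constants K±, same initial data. (Equivalently, the integral curve lies between the two bounding ellipses.) -/
/-- Chaplygin comparison for the phase curves: in the region `p̄ < 0`,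
`q ≤ 1 - e₀`, the integral curve of `dp̄/dq = (-q+1-e₀)/(k(q) p̄)` with
`K₋ ≤ k ≤ K₊` lies between the two bounding ellipses: `p̄₊(q) ≤ p̄(q) ≤ p̄₋(q)`. -/
theorem stmt9 (Kminus Kplus e₀ a qs ps : ℝ) (k p : ℝ → ℝ)
    (hKm : 0 < Kminus) (hk : ∀ x, Kminus ≤ k x ∧ k x ≤ Kplus)
    (ha : a ≤ qs) (hps : ps < 0) (hinit : p qs = ps)
    (hreg : ∀ x ∈ Set.Icc a qs, x ≤ 1 - e₀)
    (hneg : ∀ x ∈ Set.Icc a qs, p x < 0)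
    (hp : ∀ x ∈ Set.Icc a qs,
      HasDerivWithinAt p ((-x + 1 - e₀) / (k x * p x)) (Set.Icc a qs) x) :
    ∀ x ∈ Set.Icc a qs,
      -Real.sqrt (ps^2 + (qs^2 - x^2 - 2*(1-e₀)*(qs - x)) / Kplus) ≤ p x ∧
      p x ≤ -Real.sqrt (ps^2 + (qs^2 - x^2 - 2*(1-e₀)*(qs - x)) / Kminus) := by
  have hKp : 0 < Kplus := lt_of_lt_of_le hKm (le_trans (hk 0).1 (hk 0).2)
  have hkx : ∀ x, 0 < k x := fun x => lt_of_lt_of_le hKm (hk x).1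
  set I := Set.Icc a qs with hI
  have hint : interior I ⊆ I := interior_subset
  -- F = p^2
  have hF : ∀ x ∈ I, HasDerivWithinAt (fun y => (p y)^2)
      (2 * ((1 - e₀) - x) / k x) I x := by
    intro x hx
    have h1 : HasDerivWithinAt (fun y => (p y)^2)
        (2 * p x ^ 1 * ((-x + 1 - e₀) / (k x * p x))) I x := (hp x hx).pow 2
    have hpx : p x ≠ 0 := (hneg x hx).ne
    have : 2 * p x ^ 1 * ((-x + 1 - e₀) / (k x * p x)) = 2 * ((1 - e₀) - x) / k x := by
      rw [pow_one]
      field_simp [hpx, (hkx x).ne']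
      ring
    rwa [this] at h1
  have hFc : ContinuousOn (fun y => (p y)^2) I := fun x hx => (hF x hx).continuousWithinAt
  -- G K
  have hG : ∀ (K : ℝ), K ≠ 0 → ∀ x ∈ I, HasDerivWithinAt
      (fun y => ps^2 + (qs^2 - y^2 - 2*(1-e₀)*(qs - y)) / K)
      (2 * ((1 - e₀) - x) / K) I x := by
    intro K hK x hx
    have h : HasDerivWithinAt (fun y => ps^2 + (qs^2 - y^2 - 2*(1-e₀)*(qs - y)) / K) _ I x :=
      HasDerivWithinAt.const_add (ps^2) ((((((hasDerivWithinAt_id x I).pow 2).const_sub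
        (qs^2)).sub (((hasDerivWithinAt_id x I).const_sub qs).const_mul (2*(1-e₀)))).div_const K))
    convert h using 1
    simp
    ring
  have hreg' : ∀ x ∈ interior I, 0 ≤ (1 - e₀) - x := by
    intro x hx
    have := hreg x (hint hx)
    linarith
  -- upper bound on F: F ≤ Gplus, via Gplus - F antitone
  have hub : ∀ x ∈ I, (p x)^2 ≤ ps^2 + (qs^2 - x^2 - 2*(1-e₀)*(qs - x)) / Kplus := by
    have hanti : AntitoneOn (fun y => (ps^2 + (qs^2 - y^2 - 2*(1-e₀)*(qs - y)) / Kplus) - (p y)^2) I := by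
      apply antitoneOn_of_hasDerivWithinAt_nonpos (convex_Icc a qs)
      · exact fun x hx => ((hG Kplus hKp.ne' x hx).continuousWithinAt.sub (hFc x hx))
      · exact fun x hx => (((hG Kplus hKp.ne' x (hint hx)).sub (hF x (hint hx))).mono hint)
      · intro x hx
        have h1 : 2 * ((1 - e₀) - x) / Kplus ≤ 2 * ((1 - e₀) - x) / k x :=
          div_le_div_of_nonneg_left (by linarith [hreg' x hx]) (hkx x) (hk x).2
        linarith
    intro x hx
    have := hanti hx (Set.right_mem_Icc.mpr ha) hx.2
    simp only [hinit] at this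
    simp at this
    nlinarith [this]
  have hlb : ∀ x ∈ I, ps^2 + (qs^2 - x^2 - 2*(1-e₀)*(qs - x)) / Kminus ≤ (p x)^2 := by
    have hmono : MonotoneOn (fun y => (ps^2 + (qs^2 - y^2 - 2*(1-e₀)*(qs - y)) / Kminus) - (p y)^2) I := by
      apply monotoneOn_of_hasDerivWithinAt_nonneg (convex_Icc a qs)
      · exact fun x hx => ((hG Kminus hKm.ne' x hx).continuousWithinAt.sub (hFc x hx))
      · exact fun x hx => (((hG Kminus hKm.ne' x (hint hx)).sub (hF x (hint hx))).mono hint)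
      · intro x hx
        have h1 : 2 * ((1 - e₀) - x) / k x ≤ 2 * ((1 - e₀) - x) / Kminus :=
          div_le_div_of_nonneg_left (by linarith [hreg' x hx]) hKm (hk x).1
        linarith
    intro x hx
    have := hmono hx (Set.right_mem_Icc.mpr ha) hx.2
    simp only [hinit] at this
    simp at this
    nlinarith [this]
  intro x hx
  have hpx := hneg x hx
  have hFnn : (0:ℝ) ≤ (p x)^2 := sq_nonneg _
  constructor
  · have h1 : Real.sqrt ((p x)^2) ≤ Real.sqrt (ps^2 + (qs^2 - x^2 - 2*(1-e₀)*(qs - x)) / Kplus) :=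
      Real.sqrt_le_sqrt (hub x hx)
    rw [Real.sqrt_sq_eq_abs, abs_of_neg hpx] at h1
    linarith
  · have h1 : Real.sqrt (ps^2 + (qs^2 - x^2 - 2*(1-e₀)*(qs - x)) / Kminus) ≤ Real.sqrt ((p x)^2) :=
      Real.sqrt_le_sqrt (hlb x hx)
    rw [Real.sqrt_sq_eq_abs, abs_of_neg hpx] at h1
    linarith
end

section
/- If 0 < K₋ < 1 and the condition K₋^{n-1}(1-e₀)² - e₀²/K₋ - p₀² > 0 holds, then also p₀² + 2e₀ - 1 < 0 (the relativistic sufficient condition is more stringent than the non-relativistic criterion). -/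
/-- For `0 < K₋ < 1`, the relativistic sufficient condition
`K₋^(n-1)(1-e₀)² - e₀²/K₋ - p₀² > 0` implies the non-relativistic criterion
`p₀² + 2e₀ - 1 < 0`. -/
theorem stmt14 (Kminus e₀ p₀ : ℝ) (n : ℕ) (hn : 1 ≤ n)
    (hK0 : 0 < Kminus) (hK1 : Kminus < 1)
    (h : 0 < Kminus^(n-1)*(1-e₀)^2 - e₀^2/Kminus - p₀^2) :
    p₀^2 + 2*e₀ - 1 < 0 := by
  have h1 : Kminus^(n-1) ≤ 1 := pow_le_one₀ hK0.le hK1.le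
  have h2 : e₀^2 ≤ e₀^2 / Kminus := by
    rw [le_div_iff₀ hK0]
    nlinarith [sq_nonneg e₀]
  nlinarith [sq_nonneg (1 - e₀), pow_nonneg hK0.le (n-1)]
end

section
/- If P : ℝ → ℝ solves P'' = -P/√(1+P²) (the second-order form of the characteristic system) with nonconstant C = (P')² + 2√(1+P²) > 2, then P is periodic and the period T = 2∫_{P₋}^{P₊} dP/√(C - 2√(1+P²)) with P± = ±√(C²-4)/2 satisfies T > 2π, and T → 2π as C → 2⁺. -/
open Filter

open Set MeasureTheory Real Topology

/-- The period of relativistic oscillations on the level set `C = c`. -/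
noncomputable def Tper (c : ℝ) : ℝ :=
  2 * ∫ x in (-(Real.sqrt (c^2 - 4) / 2))..(Real.sqrt (c^2 - 4) / 2),
    1 / Real.sqrt (c - 2 * Real.sqrt (1 + x^2))



-- a function tending to a finite limit cannot have derivative eventually ≥ δ > 0
lemma no_limit_of_deriv_ge {f f' : ℝ → ℝ} {L δ A : ℝ}
    (hf : ∀ θ, HasDerivAt f (f' θ) θ) (hL : Tendsto f atTop (𝓝 L))
    (hδ : 0 < δ) (hA : ∀ θ, A ≤ θ → δ ≤ f' θ) : False := by
  have hg : ∀ x ∈ interior (Ici A), 0 ≤ deriv (fun θ => f θ - δ * θ) x := by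
    intro x hx
    rw [interior_Ici] at hx
    have hd : HasDerivAt (fun θ => f θ - δ * θ) (f' x - δ) x :=
      (hf x).sub (by simpa using (hasDerivAt_id x).const_mul δ)
    rw [hd.deriv]
    have := hA x hx.le
    linarith
  have hmono : MonotoneOn (fun θ => f θ - δ * θ) (Ici A) := by
    apply monotoneOn_of_deriv_nonneg (convex_Ici A)
    · exact Continuous.continuousOn (by
        have : Continuous f := Differentiable.continuous (fun x => (hf x).differentiableAt)
        fun_prop)
    · intro x hx
      rw [interior_Ici] at hx
      exact ((hf x).sub (by simpa using (hasDerivAt_id x).const_mul δ)).differentiableAt.differentiableWithinAt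
    · intro x hx
      exact hg x hx
  have hgrow : ∀ θ, A ≤ θ → f A + δ * (θ - A) ≤ f θ := by
    intro θ hθ
    have := hmono (self_mem_Ici) (mem_Ici.2 hθ) hθ
    simp only at this
    linarith
  have htop : Tendsto f atTop atTop := by
    apply tendsto_atTop_mono' atTop (eventually_atTop.2 ⟨A, fun θ hθ => hgrow θ hθ⟩)
    apply tendsto_atTop_add_const_left
    apply Tendsto.const_mul_atTop hδ
    exact tendsto_atTop_add_const_right _ _ tendsto_id
  exact not_tendsto_nhds_of_tendsto_atTop htop L hL

lemma no_limit_of_deriv_le {f f' : ℝ → ℝ} {L δ A : ℝ}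
    (hf : ∀ θ, HasDerivAt f (f' θ) θ) (hL : Tendsto f atTop (𝓝 L))
    (hδ : 0 < δ) (hA : ∀ θ, A ≤ θ → f' θ ≤ -δ) : False :=
  no_limit_of_deriv_ge (f := fun θ => -f θ) (f' := fun θ => -f' θ) (L := -L)
    (fun θ => (hf θ).neg) hL.neg hδ (fun θ hθ => by have := hA θ hθ; show δ ≤ -f' θ; linarith)

lemma image_Ioo_of_smon {f : ℝ → ℝ} {a b : ℝ} (hab : a ≤ b)
    (hcont : ContinuousOn f (Set.Icc a b)) (hm : StrictMonoOn f (Set.Icc a b)) :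
    f '' Set.Ioo a b = Set.Ioo (f a) (f b) := by
  apply Subset.antisymm
  · rintro _ ⟨x, hx, rfl⟩
    exact ⟨hm (left_mem_Icc.2 hab) (Ioo_subset_Icc_self hx) hx.1,
      hm (Ioo_subset_Icc_self hx) (right_mem_Icc.2 hab) hx.2⟩
  · exact intermediate_value_Ioo hab hcont

-- derivative of x ↦ x / sqrt (1+x^2)
lemma hasDerivAt_phi (x : ℝ) :
    HasDerivAt (fun x : ℝ => x / Real.sqrt (1 + x^2))
      (1 / ((1 + x^2) * Real.sqrt (1 + x^2))) x := by
  have hpos : (0:ℝ) < 1 + x^2 := by positivity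
  have h1 : HasDerivAt (fun x : ℝ => 1 + x^2) (2*x) x := by
    simpa using ((hasDerivAt_pow 2 x).const_add 1)
  have hg : HasDerivAt (fun x : ℝ => Real.sqrt (1 + x^2)) (2*x / (2*Real.sqrt (1+x^2))) x := by
    have := (Real.hasDerivAt_sqrt hpos.ne').comp x h1
    refine this.congr_deriv ?_
    ring
  have hs : (0:ℝ) < Real.sqrt (1+x^2) := Real.sqrt_pos.2 hpos
  have hsq : Real.sqrt (1+x^2) ^ 2 = 1 + x^2 := Real.sq_sqrt hpos.le
  have := (hasDerivAt_id' x).div hg hs.ne'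
  refine this.congr_deriv ?_
  field_simp
  ring_nf
  nlinarith [hsq, hs, sq_nonneg x, mul_pos hpos hs]

lemma lipschitz_phi : LipschitzWith 1 (fun x : ℝ => x / Real.sqrt (1 + x^2)) := by
  apply lipschitzWith_of_nnnorm_deriv_le (fun x => (hasDerivAt_phi x).differentiableAt)
  intro x
  rw [← NNReal.coe_le_coe, coe_nnnorm, (hasDerivAt_phi x).deriv]
  have hpos : (0:ℝ) < 1 + x^2 := by positivity
  have hs : (0:ℝ) < Real.sqrt (1+x^2) := Real.sqrt_pos.2 hpos
  have hs1 : (1:ℝ) ≤ Real.sqrt (1+x^2) := by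
    have := Real.sqrt_le_sqrt (show (1:ℝ) ≤ 1 + x^2 by nlinarith)
    rwa [Real.sqrt_one] at this
  rw [Real.norm_eq_abs, abs_of_pos (by positivity)]
  rw [NNReal.coe_one, div_le_one (by positivity)]
  nlinarith

-- the vector field
noncomputable def vfield : ℝ → ℝ × ℝ → ℝ × ℝ :=
  fun _ p => (-p.2, p.1 / Real.sqrt (1 + p.1^2))

lemma lipschitz_vfield (t : ℝ) : LipschitzWith 1 (vfield t) := by
  have h1 : LipschitzWith 1 (fun p : ℝ × ℝ => -p.2) := by
    simpa [Function.comp_def] using LipschitzWith.id.neg.comp LipschitzWith.prod_snd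
  have h2 : LipschitzWith 1 (fun p : ℝ × ℝ => p.1 / Real.sqrt (1 + p.1^2)) := by
    simpa [Function.comp_def] using lipschitz_phi.comp LipschitzWith.prod_fst
  have := h1.prodMk h2
  rw [max_self] at this
  exact this

section ODE
variable (P E : ℝ → ℝ) (c : ℝ)

lemma Psq_bound (hc : 2 < c)
    (hC : ∀ θ, (E θ)^2 + 2 * Real.sqrt (1 + (P θ)^2) = c) (θ : ℝ) :
    (P θ)^2 ≤ (c^2-4)/4 := by
  have hs := Real.sq_sqrt (show (0:ℝ) ≤ 1 + P θ^2 by positivity)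
  have h := hC θ
  nlinarith [sq_nonneg (E θ), Real.sqrt_nonneg (1 + P θ^2)]

lemma no_pos_forever (hc : 2 < c)
    (hP : ∀ θ, HasDerivAt P (-(E θ)) θ)
    (hE : ∀ θ, HasDerivAt E (P θ / Real.sqrt (1 + (P θ)^2)) θ)
    (hC : ∀ θ, (E θ)^2 + 2 * Real.sqrt (1 + (P θ)^2) = c)
    (A : ℝ) (hpos : ∀ θ, A < θ → 0 < E θ) : False := by
  have hPdiff : Differentiable ℝ P := fun x => (hP x).differentiableAt
  have hPcont : Continuous P := hPdiff.continuous
  have hant : AntitoneOn P (Ici (A+1)) := by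
    apply antitoneOn_of_deriv_nonpos (convex_Ici (A+1)) hPcont.continuousOn
    · intro x _
      exact (hP x).differentiableAt.differentiableWithinAt
    · intro x hx
      rw [interior_Ici] at hx
      rw [(hP x).deriv]
      have := hpos x (by linarith [hx.out])
      linarith
  have hant2 : Antitone (fun θ => P (max θ (A+1))) := by
    intro x y hxy
    exact hant (mem_Ici.2 (le_max_right x (A+1))) (mem_Ici.2 (le_max_right y (A+1)))
      (max_le_max hxy le_rfl)
  have hbdd : BddBelow (range (fun θ => P (max θ (A+1)))) := by
    refine ⟨-c, ?_⟩
    rintro _ ⟨θ, rfl⟩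
    have := Psq_bound P E c hc hC (max θ (A+1))
    nlinarith [sq_nonneg (P (max θ (A+1)) + c)]
  set L : ℝ := ⨅ θ, P (max θ (A+1)) with hLdef
  have hL2 : Tendsto (fun θ => P (max θ (A+1))) atTop (𝓝 L) := tendsto_atTop_ciInf hant2 hbdd
  have hPlim : Tendsto P atTop (𝓝 L) := by
    apply hL2.congr' (eventuallyEq_of_mem (Ici_mem_atTop (A+1)) ?_)
    intro θ hθ
    simp [max_eq_left hθ.out]
  have hE2lim : Tendsto (fun θ => (E θ)^2) atTop (𝓝 (c - 2*Real.sqrt (1+L^2))) := by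
    have hcontψ : Continuous (fun x : ℝ => c - 2*Real.sqrt (1+x^2)) := by fun_prop
    have := (hcontψ.tendsto L).comp hPlim
    apply this.congr
    intro θ
    have := hC θ
    simp only [Function.comp_apply]
    linarith
  set X : ℝ := c - 2*Real.sqrt (1+L^2) with hXdef
  have hX0 : 0 ≤ X := ge_of_tendsto hE2lim (Eventually.of_forall (fun θ => sq_nonneg (E θ)))
  have hElim : Tendsto E atTop (𝓝 (Real.sqrt X)) := by
    have := (Real.continuous_sqrt.tendsto X).comp hE2lim
    apply this.congr' (eventuallyEq_of_mem (Ioi_mem_atTop A) ?_)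
    intro θ hθ
    simp only [Function.comp_apply]
    rw [Real.sqrt_sq (hpos θ hθ.out).le]
  have hE'lim : Tendsto (fun θ => P θ / Real.sqrt (1 + (P θ)^2)) atTop
      (𝓝 (L / Real.sqrt (1+L^2))) := by
    have hcontφ : Continuous (fun x : ℝ => x / Real.sqrt (1+x^2)) := by
      apply continuous_id.div (by fun_prop)
      intro x
      positivity
    exact (hcontφ.tendsto L).comp hPlim
  rcases eq_or_lt_of_le hX0 with hX | hX
  · -- X = 0 : L = ±a, E → 0, E' → m ≠ 0
    have hsqL : Real.sqrt (1+L^2) = c/2 := by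
      have : c - 2*Real.sqrt (1+L^2) = 0 := by rw [hXdef] at hX; linarith
      linarith
    have hL2eq : L^2 = (c^2-4)/4 := by
      have := Real.sq_sqrt (show (0:ℝ) ≤ 1+L^2 by positivity)
      rw [hsqL] at this
      nlinarith
    have hLne : L ≠ 0 := by
      intro h
      rw [h] at hL2eq
      nlinarith
    have hElim0 : Tendsto E atTop (𝓝 0) := by
      rw [← hX, Real.sqrt_zero] at hElim; exact hElim
    have hden : (0:ℝ) < Real.sqrt (1+L^2) := by rw [hsqL]; linarith
    rcases hLne.lt_or_gt with hL0 | hL0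
    · -- L < 0, m < 0
      have hm : L / Real.sqrt (1+L^2) < 0 := div_neg_of_neg_of_pos hL0 hden
      have hev := hE'lim.eventually (eventually_lt_nhds (show L / Real.sqrt (1+L^2)
        < (L / Real.sqrt (1+L^2))/2 by linarith))
      rw [eventually_atTop] at hev
      obtain ⟨A₂, hA₂⟩ := hev
      exact no_limit_of_deriv_le hE hElim0 (show (0:ℝ) < -((L / Real.sqrt (1+L^2))/2) by linarith)
        (fun θ hθ => by have := hA₂ θ hθ; linarith)
    · -- L > 0, m > 0
      have hm : 0 < L / Real.sqrt (1+L^2) := div_pos hL0 hden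
      have hev := hE'lim.eventually (eventually_gt_nhds (show (L / Real.sqrt (1+L^2))/2
        < L / Real.sqrt (1+L^2) by linarith))
      rw [eventually_atTop] at hev
      obtain ⟨A₂, hA₂⟩ := hev
      exact no_limit_of_deriv_ge hE hElim0 (show (0:ℝ) < (L / Real.sqrt (1+L^2))/2 by linarith)
        (fun θ hθ => (hA₂ θ hθ).le)
  · -- X > 0 : E stays ≥ √X/2 > 0, P → -∞
    have hsX : 0 < Real.sqrt X := Real.sqrt_pos.2 hX
    have hev := hElim.eventually (eventually_gt_nhds (show Real.sqrt X/2 < Real.sqrt X by linarith))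
    rw [eventually_atTop] at hev
    obtain ⟨A₂, hA₂⟩ := hev
    exact no_limit_of_deriv_le hP hPlim (show (0:ℝ) < Real.sqrt X/2 by linarith)
      (fun θ hθ => by have := hA₂ θ hθ; linarith)

lemma exists_zero (hc : 2 < c)
    (hP : ∀ θ, HasDerivAt P (-(E θ)) θ)
    (hE : ∀ θ, HasDerivAt E (P θ / Real.sqrt (1 + (P θ)^2)) θ)
    (hC : ∀ θ, (E θ)^2 + 2 * Real.sqrt (1 + (P θ)^2) = c)
    (A : ℝ) : ∃ θ, A < θ ∧ E θ = 0 := by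
  by_contra hcon
  push_neg at hcon
  have hEdiff : Differentiable ℝ E := fun x => (hE x).differentiableAt
  have hEcont : Continuous E := hEdiff.continuous
  have h0 : E (A+1) ≠ 0 := hcon (A+1) (by linarith)
  have hsign : ∀ s : ℝ, (A < s) → (0 < E (A+1) → 0 < E s) ∧ (E (A+1) < 0 → E s < 0) := by
    intro s hs
    constructor <;> intro hsgn
    · rcases lt_trichotomy (E s) 0 with h | h | h
      · exfalso
        have hsub : uIcc (E (A+1)) (E s) ⊆ E '' uIcc (A+1) s :=
          intermediate_value_uIcc hEcont.continuousOn
        have h0mem : (0:ℝ) ∈ uIcc (E (A+1)) (E s) := by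
          rw [mem_uIcc]; right; exact ⟨h.le, hsgn.le⟩
        obtain ⟨ξ, hξ, hξ0⟩ := hsub h0mem
        have hξA : A < ξ := by
          rcases mem_uIcc.1 hξ with h' | h' <;> [linarith [h'.1]; linarith [h'.1, hs]]
        exact hcon ξ hξA hξ0
      · exact absurd h (hcon s hs)
      · exact h
    · rcases lt_trichotomy (E s) 0 with h | h | h
      · exact h
      · exact absurd h (hcon s hs)
      · exfalso
        have hsub : uIcc (E (A+1)) (E s) ⊆ E '' uIcc (A+1) s :=
          intermediate_value_uIcc hEcont.continuousOn
        have h0mem : (0:ℝ) ∈ uIcc (E (A+1)) (E s) := by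
          rw [mem_uIcc]; left; exact ⟨hsgn.le, h.le⟩
        obtain ⟨ξ, hξ, hξ0⟩ := hsub h0mem
        have hξA : A < ξ := by
          rcases mem_uIcc.1 hξ with h' | h' <;> [linarith [h'.1]; linarith [h'.1, hs]]
        exact hcon ξ hξA hξ0
  rcases h0.lt_or_gt with hneg | hpos
  · -- E < 0 on Ioi A; apply no_pos_forever to (-P, -E)
    apply no_pos_forever (fun t => -P t) (fun t => -E t) c hc
      (fun θ => by simpa [Pi.neg_def] using (hP θ).neg)
      (fun θ => by simpa [neg_div, Pi.neg_def] using (hE θ).neg)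
      (fun θ => by simpa using hC θ)
      A (fun θ hθ => by simp; linarith [(hsign θ hθ).2 hneg])
  · exact no_pos_forever P E c hc hP hE hC A (fun θ hθ => (hsign θ hθ).1 hpos)

lemma reflect_sol
    (hP : ∀ θ, HasDerivAt P (-(E θ)) θ)
    (hE : ∀ θ, HasDerivAt E (P θ / Real.sqrt (1 + (P θ)^2)) θ)
    (θs : ℝ) (hz : E θs = 0) :
    ∀ θ, P (2*θs - θ) = P θ ∧ E (2*θs - θ) = -E θ := by
  have hPdiff : Differentiable ℝ P := fun x => (hP x).differentiableAt
  have hPcont : Continuous P := hPdiff.continuous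
  have hEdiff : Differentiable ℝ E := fun x => (hE x).differentiableAt
  have hEcont : Continuous E := hEdiff.continuous
  have key : ∀ θ, θs ≤ θ → P (2*θs - θ) = P θ ∧ E (2*θs - θ) = -E θ := by
    intro θ hθ
    have hgd1 : ∀ t : ℝ, HasDerivAt (fun t => P (2*θs - t)) (E (2*θs - t)) t := by
      intro t
      have hinner : HasDerivAt (fun t : ℝ => 2*θs - t) (-1) t := by
        simpa [Pi.sub_def] using (hasDerivAt_const t (2*θs)).sub (hasDerivAt_id' t)
      simpa [Function.comp_def] using (hP (2*θs - t)).comp t hinner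
    have hgd2 : ∀ t : ℝ, HasDerivAt (fun t => -E (2*θs - t))
        (P (2*θs - t) / Real.sqrt (1 + (P (2*θs - t))^2)) t := by
      intro t
      have hinner : HasDerivAt (fun t : ℝ => 2*θs - t) (-1) t := by
        simpa [Pi.sub_def] using (hasDerivAt_const t (2*θs)).sub (hasDerivAt_id' t)
      simpa [Function.comp_def, Pi.neg_def] using ((hE (2*θs - t)).comp t hinner).neg
    have main : EqOn (fun t => (P t, E t)) (fun t => (P (2*θs - t), -E (2*θs - t)))
        (Icc θs θ) := by
      apply ODE_solution_unique (v := vfield) (K := 1) (fun _ => lipschitz_vfield _)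
      · exact ((hPcont.prodMk hEcont).continuousOn)
      · intro t _
        exact ((hP t).prodMk (hE t)).hasDerivWithinAt
      · apply Continuous.continuousOn
        apply Continuous.prodMk
        · exact hPcont.comp (by fun_prop)
        · exact (hEcont.comp (by fun_prop)).neg
      · intro t _
        have h1 := hgd1 t
        have h2 := hgd2 t
        have : HasDerivAt (fun t => (P (2*θs - t), -E (2*θs - t)))
            (-(-E (2*θs - t)), P (2*θs - t) / Real.sqrt (1 + (P (2*θs - t))^2)) t := by
          rw [neg_neg]
          exact h1.prodMk h2
        exact this.hasDerivWithinAt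
      · rw [show 2*θs - θs = θs by ring]
        simp [hz]
    have := main (right_mem_Icc.2 hθ)
    simp only [Prod.mk.injEq] at this
    exact ⟨this.1.symm, by linarith [this.2]⟩
  intro θ
  rcases le_total θs θ with h | h
  · exact key θ h
  · have := key (2*θs - θ) (by linarith)
    rw [show 2*θs - (2*θs - θ) = θ by ring] at this
    exact ⟨this.1.symm, by linarith [this.2]⟩

lemma periodic_aux (hc : 2 < c)
    (hP : ∀ θ, HasDerivAt P (-(E θ)) θ)
    (hE : ∀ θ, HasDerivAt E (P θ / Real.sqrt (1 + (P θ)^2)) θ)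
    (hC : ∀ θ, (E θ)^2 + 2 * Real.sqrt (1 + (P θ)^2) = c)
    (θ₀ : ℝ) (h0 : E θ₀ = 0) (hPneg : P θ₀ = -(Real.sqrt (c^2-4)/2)) :
    Function.Periodic P (2 * ∫ x in Ioo (-(Real.sqrt (c^2-4)/2)) (Real.sqrt (c^2-4)/2),
      1 / Real.sqrt (c - 2 * Real.sqrt (1 + x^2))) := by
  have hPdiff : Differentiable ℝ P := fun x => (hP x).differentiableAt
  have hPcont : Continuous P := hPdiff.continuous
  have hEdiff : Differentiable ℝ E := fun x => (hE x).differentiableAt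
  have hEcont : Continuous E := hEdiff.continuous
  set a : ℝ := Real.sqrt (c^2-4)/2 with ha
  have ha2 : a^2 = (c^2-4)/4 := by
    rw [ha, div_pow, Real.sq_sqrt (by nlinarith)]; ring
  have hapos : 0 < a := div_pos (Real.sqrt_pos.2 (by nlinarith)) two_pos
  -- E' (θ₀) < 0
  have hd0 : P θ₀ / Real.sqrt (1 + (P θ₀)^2) < 0 := by
    apply div_neg_of_neg_of_pos
    · rw [hPneg]; linarith
    · positivity
  -- E < 0 just to the right of θ₀
  have hneg : {θ | E θ < 0} ∈ 𝓝[>] θ₀ := by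
    have hslope := hasDerivAt_iff_tendsto_slope.1 (hE θ₀)
    have h1 : ∀ᶠ θ in 𝓝[≠] θ₀, slope E θ₀ θ < 0 :=
      hslope.eventually (eventually_lt_nhds hd0)
    have h2 : ∀ᶠ θ in 𝓝[>] θ₀, slope E θ₀ θ < 0 :=
      h1.filter_mono (nhdsWithin_mono _ (fun x hx => ne_of_gt hx))
    have h3 : ∀ᶠ θ in 𝓝[>] θ₀, θ₀ < θ := self_mem_nhdsWithin
    filter_upwards [h2, h3] with θ hs hgt
    have : slope E θ₀ θ = E θ / (θ - θ₀) := by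
      rw [slope_def_field, h0]; ring
    rw [this] at hs
    have := (div_neg_iff).1 hs
    rcases this with ⟨_, h⟩ | ⟨h, _⟩
    · linarith
    · exact h
  obtain ⟨u, hu, hsub⟩ := mem_nhdsGT_iff_exists_Ioo_subset.1 hneg
  have hu' : θ₀ < u := hu.out
  set w : ℝ := (θ₀ + u)/2 with hw
  have hw1 : θ₀ < w := by rw [hw]; linarith
  have hw2 : w < u := by rw [hw]; linarith
  have hEw : E w < 0 := hsub ⟨hw1, hw2⟩
  -- the next zero of E
  set S : Set ℝ := Ici w ∩ E ⁻¹' {0} with hS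
  have hSclosed : IsClosed S := isClosed_Ici.inter (isClosed_singleton.preimage hEcont)
  have hSne : S.Nonempty := by
    obtain ⟨θ, hθ, hθ0⟩ := exists_zero P E c hc hP hE hC w
    exact ⟨θ, hθ.le, hθ0⟩
  have hSbdd : BddBelow S := ⟨w, fun x hx => hx.1⟩
  set θ₁ : ℝ := sInf S with hθ₁
  have hθ₁S : θ₁ ∈ S := hSclosed.csInf_mem hSne hSbdd
  have hE1 : E θ₁ = 0 := hθ₁S.2
  have hwθ₁ : w ≤ θ₁ := hθ₁S.1
  have huθ₁ : u ≤ θ₁ := by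
    by_contra h
    push_neg at h
    exact absurd hE1 (ne_of_lt (hsub ⟨by linarith, h⟩))
  have hθ₀₁ : θ₀ < θ₁ := by linarith
  have hEneg : ∀ θ ∈ Ioo θ₀ θ₁, E θ < 0 := by
    rintro θ ⟨h1, h2⟩
    by_cases hθu : θ < u
    · exact hsub ⟨h1, hθu⟩
    · push_neg at hθu
      rcases lt_trichotomy (E θ) 0 with h | h | h
      · exact h
      · exfalso
        have hmem : θ ∈ S := ⟨mem_Ici.2 (by linarith), by simpa using h⟩
        have hle := csInf_le hSbdd hmem
        rw [← hθ₁] at hle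
        linarith
      · exfalso
        have hsub2 : uIcc (E w) (E θ) ⊆ E '' uIcc w θ :=
          intermediate_value_uIcc hEcont.continuousOn
        have h0mem : (0:ℝ) ∈ uIcc (E w) (E θ) := by
          rw [mem_uIcc]; left; exact ⟨hEw.le, h.le⟩
        obtain ⟨ξ, hξ, hξ0⟩ := hsub2 h0mem
        rw [uIcc_of_le (by linarith)] at hξ
        have hmem : ξ ∈ S := ⟨mem_Ici.2 hξ.1, by simpa using hξ0⟩
        have hle := csInf_le hSbdd hmem
        rw [← hθ₁] at hle
        linarith [hξ.2]
  have hmono : StrictMonoOn P (Icc θ₀ θ₁) := by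
    apply strictMonoOn_of_deriv_pos (convex_Icc θ₀ θ₁) hPcont.continuousOn
    intro x hx
    rw [interior_Icc] at hx
    rw [(hP x).deriv]
    linarith [hEneg x hx]
  have hP1 : P θ₁ = a := by
    have h1 := hC θ₁
    rw [hE1] at h1
    have hs := Real.sq_sqrt (show (0:ℝ) ≤ 1 + (P θ₁)^2 by positivity)
    have hsq : (P θ₁)^2 = a^2 := by
      have h2 : Real.sqrt (1 + (P θ₁)^2) = c/2 := by linarith
      rw [h2] at hs
      nlinarith [ha2]
    have hgt : P θ₁ > -a := by
      have := hmono (left_mem_Icc.2 hθ₀₁.le) (right_mem_Icc.2 hθ₀₁.le) hθ₀₁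
      rw [hPneg] at this
      exact this
    have hfac : (P θ₁ - a) * (P θ₁ + a) = 0 := by linear_combination hsq
    rcases mul_eq_zero.1 hfac with h | h
    · linarith
    · linarith
  -- the time identity
  have timeId : θ₁ - θ₀ = ∫ x in Ioo (-a) a, 1 / Real.sqrt (c - 2 * Real.sqrt (1 + x^2)) := by
    have himg : P '' Ioo θ₀ θ₁ = Ioo (-a) a := by
      rw [image_Ioo_of_smon hθ₀₁.le hPcont.continuousOn hmono, hPneg, hP1]
    have hcov := integral_image_eq_integral_abs_deriv_smul (measurableSet_Ioo (a := θ₀) (b := θ₁))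
      (fun θ _ => (hP θ).hasDerivWithinAt)
      (hmono.injOn.mono Ioo_subset_Icc_self)
      (fun x => 1 / Real.sqrt (c - 2 * Real.sqrt (1 + x^2)))
    rw [himg] at hcov
    rw [hcov]
    have hone : ∀ θ ∈ Ioo θ₀ θ₁,
        |(-(E θ))| • (1 / Real.sqrt (c - 2 * Real.sqrt (1 + (P θ)^2))) = 1 := by
      intro θ hθ
      have hEθ := hEneg θ hθ
      have hCE : c - 2 * Real.sqrt (1 + (P θ)^2) = (E θ)^2 := by linarith [hC θ]
      rw [hCE, Real.sqrt_sq_eq_abs, abs_neg, smul_eq_mul, abs_of_neg hEθ]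
      field_simp
      exact div_self (ne_of_lt hEθ)
    rw [setIntegral_congr_fun measurableSet_Ioo hone]
    rw [setIntegral_const, smul_eq_mul, mul_one, measureReal_def, Real.volume_Ioo,
      ENNReal.toReal_ofReal (by linarith)]
  -- reflections and conclusion
  have r0 := reflect_sol P E hP hE θ₀ h0
  have r1 := reflect_sol P E hP hE θ₁ hE1
  intro θ
  rw [← timeId]
  have e1 := (r1 (2*θ₀ - θ)).1
  have e0 := (r0 θ).1
  rw [show 2*θ₁ - (2*θ₀ - θ) = θ + 2*(θ₁ - θ₀) by ring] at e1
  rw [e1, e0]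

end ODE

lemma cov_lemma (c : ℝ) (hc : 2 < c) :
    (∫ x in Ioo (-(Real.sqrt (c^2-4)/2)) (Real.sqrt (c^2-4)/2),
      1 / Real.sqrt (c - 2 * Real.sqrt (1 + x^2)))
    = ∫ t in Ioo (-(π/2)) (π/2),
        Real.sqrt (c + 2 * Real.sqrt (1 + (c^2-4)/4 * Real.sin t^2)) / 2 := by
  set a : ℝ := Real.sqrt (c^2-4)/2 with ha
  have ha2 : a^2 = (c^2-4)/4 := by
    rw [ha, div_pow, Real.sq_sqrt (by nlinarith)]; ring
  have hapos : 0 < a := div_pos (Real.sqrt_pos.2 (by nlinarith)) two_pos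
  have hs : MeasurableSet (Ioo (-(π/2)) (π/2) : Set ℝ) := measurableSet_Ioo
  have hderiv : ∀ t ∈ Ioo (-(π/2)) (π/2),
      HasDerivWithinAt (fun t => a * Real.sin t) (a * Real.cos t) (Ioo (-(π/2)) (π/2)) t :=
    fun t _ => ((Real.hasDerivAt_sin t).const_mul a).hasDerivWithinAt
  have hmono : StrictMonoOn (fun t => a * Real.sin t) (Set.Icc (-(π/2)) (π/2)) := by
    intro x hx y hy hxy
    exact mul_lt_mul_of_pos_left (Real.strictMonoOn_sin hx hy hxy) hapos
  have hinj : InjOn (fun t => a * Real.sin t) (Ioo (-(π/2)) (π/2)) :=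
    (hmono.injOn).mono Ioo_subset_Icc_self
  have himg : (fun t => a * Real.sin t) '' Ioo (-(π/2)) (π/2) = Ioo (-a) a := by
    rw [image_Ioo_of_smon (by linarith [Real.pi_pos]) (by fun_prop) hmono]
    simp [Real.sin_pi_div_two]
  rw [← himg, integral_image_eq_integral_abs_deriv_smul hs hderiv hinj]
  apply setIntegral_congr_fun hs
  intro t ht
  have hcos : 0 < Real.cos t := Real.cos_pos_of_mem_Ioo ht
  set Y : ℝ := Real.sqrt (1 + (c^2-4)/4 * Real.sin t^2) with hYdef
  have hYnn : 0 ≤ (1 : ℝ) + (c^2-4)/4 * Real.sin t^2 := by nlinarith [sq_nonneg (Real.sin t)]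
  have hYsq : Y^2 = 1 + (c^2-4)/4 * Real.sin t^2 := Real.sq_sqrt hYnn
  have hY0 : 0 < Y := Real.sqrt_pos.2 (by nlinarith [sq_nonneg (Real.sin t)])
  have hsincos : Real.sin t^2 = 1 - Real.cos t^2 := by
    have := Real.sin_sq_add_cos_sq t; linarith
  have hc4 : 0 < c^2 - 4 := by nlinarith
  have hYlt : 2 * Y < c := by
    have h1 : Y^2 < c^2/4 := by
      rw [hYsq, hsincos]; nlinarith [mul_pos hc4 (mul_pos hcos hcos)]
    nlinarith
  have hprod : Real.sqrt (c - 2*Y) * Real.sqrt (c + 2*Y) = 2*a*Real.cos t := by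
    rw [← Real.sqrt_mul (by linarith)]
    have : (c - 2*Y) * (c + 2*Y) = (2*a*Real.cos t)^2 := by
      have h2 : c^2 - 4*Y^2 = (2*a*Real.cos t)^2 := by
        rw [hYsq, hsincos]; nlinarith [ha2]
      linear_combination h2
    rw [this, Real.sqrt_sq (by positivity)]
  have h1 : (1 + (a * Real.sin t)^2) = 1 + (c^2-4)/4 * Real.sin t^2 := by
    rw [mul_pow, ha2]
  show |a * Real.cos t| • (1 / Real.sqrt (c - 2 * Real.sqrt (1 + (a*Real.sin t)^2)))
      = Real.sqrt (c + 2*Y) / 2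
  rw [h1, ← hYdef, smul_eq_mul, abs_of_pos (by positivity)]
  have hsq1 : 0 < Real.sqrt (c - 2*Y) := Real.sqrt_pos.2 (by linarith)
  have hsq2 : 0 < Real.sqrt (c + 2*Y) := Real.sqrt_pos.2 (by linarith)
  field_simp
  nlinarith [hprod, hsq1, hsq2]



lemma Tper_eq_Ioo (c : ℝ) (hc : 2 < c) :
    Tper c = 2 * ∫ x in Ioo (-(Real.sqrt (c^2-4)/2)) (Real.sqrt (c^2-4)/2),
      1 / Real.sqrt (c - 2 * Real.sqrt (1 + x^2)) := by
  have h : -(Real.sqrt (c^2-4)/2) ≤ Real.sqrt (c^2-4)/2 := by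
    have := Real.sqrt_nonneg (c^2-4); linarith
  rw [Tper, intervalIntegral.integral_of_le h, ← integral_Ioc_eq_integral_Ioo]

lemma h_integrable (c : ℝ) :
    IntegrableOn (fun t => Real.sqrt (c + 2 * Real.sqrt (1 + (c^2-4)/4 * Real.sin t^2)) / 2)
      (Ioo (-(π/2)) (π/2)) volume := by
  have hcont : Continuous (fun t : ℝ =>
      Real.sqrt (c + 2 * Real.sqrt (1 + (c^2-4)/4 * Real.sin t^2)) / 2) := by fun_prop
  exact (hcont.integrableOn_Icc).mono_set Ioo_subset_Icc_self

lemma Tper_bounds (c : ℝ) (hc : 2 < c) :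
    π * Real.sqrt (c+2) ≤ Tper c ∧ Tper c ≤ π * Real.sqrt (2*c) := by
  have hc4 : (0:ℝ) ≤ c^2 - 4 := by nlinarith
  have hvol : (volume (Ioo (-(π/2)) (π/2) : Set ℝ)).toReal = π := by
    rw [Real.volume_Ioo]
    rw [ENNReal.toReal_ofReal (by linarith [Real.pi_pos])]
    ring
  have hlow : ∀ t : ℝ, Real.sqrt (c+2)/2
      ≤ Real.sqrt (c + 2 * Real.sqrt (1 + (c^2-4)/4 * Real.sin t^2)) / 2 := by
    intro t
    have h1 : (1:ℝ) ≤ Real.sqrt (1 + (c^2-4)/4 * Real.sin t^2) := by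
      have h1' := Real.sqrt_le_sqrt (show (1:ℝ) ≤ 1 + (c^2-4)/4 * Real.sin t^2 by
        nlinarith [sq_nonneg (Real.sin t)])
      rwa [Real.sqrt_one] at h1'
    have := Real.sqrt_le_sqrt (show c + 2 ≤ c + 2 * Real.sqrt (1 + (c^2-4)/4 * Real.sin t^2) by linarith)
    linarith
  have hhigh : ∀ t : ℝ, Real.sqrt (c + 2 * Real.sqrt (1 + (c^2-4)/4 * Real.sin t^2)) / 2
      ≤ Real.sqrt (2*c)/2 := by
    intro t
    have h1 : Real.sqrt (1 + (c^2-4)/4 * Real.sin t^2) ≤ c/2 := by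
      rw [show c/2 = Real.sqrt ((c/2)^2) from (Real.sqrt_sq (by linarith)).symm]
      exact Real.sqrt_le_sqrt (by nlinarith [Real.sin_sq_le_one t])
    have := Real.sqrt_le_sqrt (show c + 2 * Real.sqrt (1 + (c^2-4)/4 * Real.sin t^2) ≤ 2*c by linarith)
    linarith
  have hmeas : MeasurableSet (Ioo (-(π/2)) (π/2) : Set ℝ) := measurableSet_Ioo
  have hint := h_integrable c
  have hI := (Tper_eq_Ioo c hc).trans (by rw [cov_lemma c hc])
  constructor
  · have : ∫ t in Ioo (-(π/2)) (π/2), (Real.sqrt (c+2)/2 : ℝ)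
        ≤ ∫ t in Ioo (-(π/2)) (π/2),
          Real.sqrt (c + 2 * Real.sqrt (1 + (c^2-4)/4 * Real.sin t^2)) / 2 := by
      apply setIntegral_mono_on (by simp [integrableOn_const]) hint hmeas
      exact fun t _ => hlow t
    rw [setIntegral_const, measureReal_def, hvol, smul_eq_mul] at this
    rw [hI]; linarith
  · have : (∫ t in Ioo (-(π/2)) (π/2),
        Real.sqrt (c + 2 * Real.sqrt (1 + (c^2-4)/4 * Real.sin t^2)) / 2)
        ≤ ∫ t in Ioo (-(π/2)) (π/2), (Real.sqrt (2*c)/2 : ℝ) := by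
      apply setIntegral_mono_on hint (by simp [integrableOn_const]) hmeas
      exact fun t _ => hhigh t
    rw [setIntegral_const, measureReal_def, hvol, smul_eq_mul] at this
    rw [hI]; linarith

lemma Tper_gt (c : ℝ) (hc : 2 < c) : 2 * π < Tper c := by
  have := (Tper_bounds c hc).1
  have h2 : (2:ℝ) < Real.sqrt (c+2) := by
    have hsq := Real.sq_sqrt (show (0:ℝ) ≤ c+2 by linarith)
    nlinarith [Real.sqrt_nonneg (c+2)]
  nlinarith [Real.pi_pos]

lemma Tper_tendsto : Tendsto Tper (nhdsWithin 2 (Set.Ioi 2)) (nhds (2 * π)) := by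
  have h4 : Real.sqrt 4 = 2 := by
    rw [show (4:ℝ) = 2^2 by norm_num, Real.sqrt_sq]; norm_num
  have hlow : Tendsto (fun c => π * Real.sqrt (c+2)) (nhdsWithin 2 (Set.Ioi 2)) (nhds (2*π)) := by
    have : Tendsto (fun c : ℝ => π * Real.sqrt (c+2)) (nhds 2) (nhds (π * Real.sqrt (2+2))) := by
      apply Tendsto.const_mul
      exact (Real.continuous_sqrt.comp (continuous_id.add continuous_const)).tendsto 2
    rw [show (2:ℝ)+2 = 4 by norm_num, h4] at this
    rw [show 2*π = π*2 by ring]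
    exact this.mono_left nhdsWithin_le_nhds
  have hhigh : Tendsto (fun c => π * Real.sqrt (2*c)) (nhdsWithin 2 (Set.Ioi 2)) (nhds (2*π)) := by
    have : Tendsto (fun c : ℝ => π * Real.sqrt (2*c)) (nhds 2) (nhds (π * Real.sqrt (2*2))) := by
      apply Tendsto.const_mul
      exact (Real.continuous_sqrt.comp (continuous_const.mul continuous_id)).tendsto 2
    rw [show (2:ℝ)*2 = 4 by norm_num, h4] at this
    rw [show 2*π = π*2 by ring]
    exact this.mono_left nhdsWithin_le_nhds
  apply tendsto_of_tendsto_of_tendsto_of_le_of_le' hlow hhigh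
  · exact eventually_nhdsWithin_of_forall (fun c hc => (Tper_bounds c hc).1)
  · exact eventually_nhdsWithin_of_forall (fun c hc => (Tper_bounds c hc).2)


/-- A solution of the characteristic system with conserved energy `c > 2` is
periodic with period `Tper c > 2π`, and `Tper c → 2π` as `c → 2⁺`. -/
theorem stmt16 (P E : ℝ → ℝ) (c : ℝ) (hc : 2 < c)
    (hP : ∀ θ, HasDerivAt P (-(E θ)) θ)
    (hE : ∀ θ, HasDerivAt E (P θ / Real.sqrt (1 + (P θ)^2)) θ)
    (hC : ∀ θ, (E θ)^2 + 2 * Real.sqrt (1 + (P θ)^2) = c) :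
    Function.Periodic P (Tper c) ∧ 2 * Real.pi < Tper c ∧
      Tendsto Tper (nhdsWithin 2 (Set.Ioi 2)) (nhds (2 * Real.pi)) := by
  refine ⟨?_, Tper_gt c hc, Tper_tendsto⟩
  obtain ⟨θ₀, _, h0⟩ := exists_zero P E c hc hP hE hC 0
  set a : ℝ := Real.sqrt (c^2-4)/2 with ha
  have ha2 : a^2 = (c^2-4)/4 := by
    rw [ha, div_pow, Real.sq_sqrt (by nlinarith)]; ring
  have hPsq : (P θ₀)^2 = a^2 := by
    have h1 := hC θ₀
    rw [h0] at h1
    have hs := Real.sq_sqrt (show (0:ℝ) ≤ 1 + (P θ₀)^2 by positivity)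
    have h2 : Real.sqrt (1 + (P θ₀)^2) = c/2 := by linarith
    rw [h2] at hs
    nlinarith [ha2]
  have hfac : (P θ₀ - a) * (P θ₀ + a) = 0 := by linear_combination hPsq
  have hTper : Tper c = 2 * ∫ x in Ioo (-a) a,
      1 / Real.sqrt (c - 2 * Real.sqrt (1 + x^2)) := Tper_eq_Ioo c hc
  rw [hTper]
  rcases mul_eq_zero.1 hfac with h | h
  · -- P θ₀ = a : use the symmetric solution (-P, -E)
    have hPa : P θ₀ = a := by linarith
    have hper := periodic_aux (fun t => -P t) (fun t => -E t) c hc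
      (fun θ => by simpa [Pi.neg_def] using (hP θ).neg)
      (fun θ => by simpa [neg_div, Pi.neg_def] using (hE θ).neg)
      (fun θ => by simpa using hC θ)
      θ₀ (by simp [h0]) (by simp [hPa, ha])
    intro θ
    have := hper θ
    simp only [neg_inj] at this
    exact this
  · -- P θ₀ = -a
    have hPa : P θ₀ = -a := by linarith
    exact periodic_aux P E c hc hP hE hC θ₀ h0 hPa
end
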